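/- Let X, Y be two compact topological spaces endowed with continuous functions φ: X → ℝⁿ, ψ: Y → ℝⁿ, let (u,v), (u',v') ∈ Δ⁺, and let k be an integer. If no surjective homomorphism exists from any subgroup of H_k^{(X,φ)}(u,v) onto H_k^{(Y,ψ)}(u',v'), then δ((X,φ),(Y,ψ)) ≥ min_i min{uᵢ − u'ᵢ, v'ᵢ − vᵢ}. -/

import Mathlib

open CategoryTheory

/-- The "chains with coefficients in `G`" functor `S ↦ S →₀ G`. -/
@[simps]
noncomputable def coeffFunctor (G : Type) [AddCommGroup G] : Type ⥤ AddCommGrpCat where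
  obj S := AddCommGrpCat.of (S →₀ G)
  map f := AddCommGrpCat.ofHom (Finsupp.mapDomain.addMonoidHom f)
  map_id S := AddCommGrpCat.hom_ext Finsupp.mapDomain.addMonoidHom_id
  map_comp f g := AddCommGrpCat.hom_ext (Finsupp.mapDomain.addMonoidHom_comp g f)

/-- The singular chain complex with coefficients in the abelian group `G`. -/
noncomputable def singularChainComplexFunctor (G : Type) [AddCommGroup G] :
    TopCat.{0} ⥤ ChainComplex AddCommGrpCat ℕ :=
  TopCat.toSSet ⋙ ((SimplicialObject.whiskering (Type 0) AddCommGrpCat).obj (coeffFunctor G)) ⋙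
    AlgebraicTopology.alternatingFaceMapComplex AddCommGrpCat

/-- Singular homology with coefficients in `G`, in degree `k : ℤ` (trivial in negative degrees). -/
noncomputable def singularHomologyFunctor (G : Type) [AddCommGroup G] (k : ℤ) :
    TopCat.{0} ⥤ AddCommGrpCat :=
  if 0 ≤ k then
    singularChainComplexFunctor G ⋙ HomologicalComplex.homologyFunctor AddCommGrpCat _ k.toNat
  else (Functor.const _).obj (AddCommGrpCat.of PUnit)

/-- The sublevel set `X⟨φ ≼ u⟩`. -/
def sublevelSet {n : ℕ} {X : Type} (φ : X → Fin n → ℝ) (u : Fin n → ℝ) : Set X :=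
  {x | ∀ i, φ x i ≤ u i}

/-- The sublevel set as a topological space. -/
def sublevelTop {n : ℕ} {X : Type} [TopologicalSpace X] (φ : X → Fin n → ℝ)
    (u : Fin n → ℝ) : TopCat.{0} :=
  TopCat.of (sublevelSet φ u)

/-- The inclusion of sublevel sets. -/
def sublevelIncl {n : ℕ} {X : Type} [TopologicalSpace X] (φ : X → Fin n → ℝ)
    {u v : Fin n → ℝ} (h : ∀ i, u i ≤ v i) : sublevelTop φ u ⟶ sublevelTop φ v :=
  TopCat.ofHom (ContinuousMap.mk (Set.inclusion (fun _x hx i => le_trans (hx i) (h i)))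
    (continuous_inclusion _))

/-- The multidimensional `k`-th persistent homology group of `(X, φ)` at `(u, v)`,
with coefficients in the abelian group `G`: the image of the homomorphism induced
in homology by the inclusion of sublevel sets. -/
noncomputable def persistentHomologyGroup (G : Type) [AddCommGroup G] (k : ℤ)
    {n : ℕ} {X : Type} [TopologicalSpace X] (φ : X → Fin n → ℝ)
    {u v : Fin n → ℝ} (h : ∀ i, u i ≤ v i) : Type :=
  AddMonoidHom.range ((singularHomologyFunctor G k).map (sublevelIncl φ h)).hom

noncomputable instance (G : Type) [AddCommGroup G] (k : ℤ)
    {n : ℕ} {X : Type} [TopologicalSpace X] (φ : X → Fin n → ℝ)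
    {u v : Fin n → ℝ} (h : ∀ i, u i ≤ v i) :
    AddCommGroup (persistentHomologyGroup G k φ h) := by
  unfold persistentHomologyGroup; infer_instance

/-- There is a surjective homomorphism from a subgroup of `A` onto `B`. -/
def ExistsSurjHomFromSubgroup (A B : Type) [AddCommGroup A] [AddCommGroup B] : Prop :=
  ∃ (S : AddSubgroup A) (f : S →+ B), Function.Surjective f

/-- The set `E` of all `ε ≥ 0` such that, for every `(u,v) ∈ Δ⁺`, surjective homomorphisms
exist from a subgroup of `H_k^{(X,φ)}(u,v)` onto `H_k^{(Y,ψ)}(u-ε⃗,v+ε⃗)` and from a subgroup of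
`H_k^{(Y,ψ)}(u,v)` onto `H_k^{(X,φ)}(u-ε⃗,v+ε⃗)`. -/
def dTSet (G : Type) [AddCommGroup G] (k : ℤ) {n : ℕ} {X Y : Type}
    [TopologicalSpace X] [TopologicalSpace Y]
    (φ : X → Fin n → ℝ) (ψ : Y → Fin n → ℝ) : Set ℝ :=
  {ε | ∃ hε : 0 ≤ ε, ∀ u v : Fin n → ℝ, ∀ h : ∀ i, u i < v i,
    ExistsSurjHomFromSubgroup
      (persistentHomologyGroup G k φ (fun i => (h i).le))
      (persistentHomologyGroup G k ψ
        (u := fun i => u i - ε) (v := fun i => v i + ε)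
        (fun i => by have := (h i).le; (try dsimp only); linarith)) ∧
    ExistsSurjHomFromSubgroup
      (persistentHomologyGroup G k ψ (fun i => (h i).le))
      (persistentHomologyGroup G k φ
        (u := fun i => u i - ε) (v := fun i => v i + ε)
        (fun i => by have := (h i).le; (try dsimp only); linarith))}

/-- The pseudo-distance `d_T` between the `k`-th persistent homology groups of `(X,φ)`
and `(Y,ψ)`: the infimum of the set `E` (`∞` if `E` is empty). -/
noncomputable def dT (G : Type) [AddCommGroup G] (k : ℤ) {n : ℕ} {X Y : Type}
    [TopologicalSpace X] [TopologicalSpace Y]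
    (φ : X → Fin n → ℝ) (ψ : Y → Fin n → ℝ) : ENNReal :=
  sInf (ENNReal.ofReal '' dTSet G k φ ψ)

/-- The sup-norm (max-norm) distance between two `ℝⁿ`-valued functions. -/
noncomputable def supNormDist {n : ℕ} {X : Type} (φ ψ : X → Fin n → ℝ) : ENNReal :=
  ⨆ (x : X) (i : Fin n), ENNReal.ofReal |φ x i - ψ x i|

/-- The natural pseudo-distance between `(X,φ)` and `(Y,ψ)`:
`inf_h ‖φ - ψ ∘ h‖_∞` over all homeomorphisms `h : X → Y` (`∞` if none exists). -/
noncomputable def naturalPseudoDistance {n : ℕ} {X Y : Type}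
    [TopologicalSpace X] [TopologicalSpace Y]
    (φ : X → Fin n → ℝ) (ψ : Y → Fin n → ℝ) : ENNReal :=
  ⨅ (h : X ≃ₜ Y), supNormDist φ (fun x => ψ (h x))

/-- **Corollary.** Let `X`, `Y` be two compact topological spaces endowed with continuous
functions `φ : X → ℝⁿ`, `ψ : Y → ℝⁿ`, let `(u,v), (u',v') ∈ Δ⁺`, and let `k` be an integer.
If no surjective homomorphism exists from any subgroup of `H_k^{(X,φ)}(u,v)` onto
`H_k^{(Y,ψ)}(u',v')`, then `δ((X,φ),(Y,ψ)) ≥ min_i min{uᵢ − u'ᵢ, v'ᵢ − vᵢ}`. -/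
theorem naturalPseudoDistance_lower_bound (G : Type) [AddCommGroup G] (k : ℤ) (n : ℕ)
    {X Y : Type} [TopologicalSpace X] [TopologicalSpace Y]
    [CompactSpace X] [CompactSpace Y]
    (φ : X → Fin n → ℝ) (ψ : Y → Fin n → ℝ) (hφ : Continuous φ) (hψ : Continuous ψ)
    (u v u' v' : Fin n → ℝ) (huv : ∀ i, u i < v i) (huv' : ∀ i, u' i < v' i)
    (hno : ¬ ExistsSurjHomFromSubgroup
      (persistentHomologyGroup G k φ (fun i => (huv i).le))
      (persistentHomologyGroup G k ψ (fun i => (huv' i).le))) :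
    ENNReal.ofReal (⨅ i : Fin n, min (u i - u' i) (v' i - v i)) ≤
      naturalPseudoDistance φ ψ := by
  
  classical
  by_cases hn : Nonempty (Fin n)
  case neg =>
    rw [not_nonempty_iff] at hn
    rw [Real.iInf_of_isEmpty]
    simp
  set c : ℝ := ⨅ i : Fin n, min (u i - u' i) (v' i - v i) with hc
  have hci : ∀ i, c ≤ min (u i - u' i) (v' i - v i) := fun i =>
    ciInf_le (Finite.bddBelow_range _) i
  refine le_iInf fun h => ?_
  by_contra hlt
  push_neg at hlt
  have key : ∀ (x : X) (i : Fin n), |φ x i - ψ (h x) i| < c := by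
    intro x i
    have h1 : ENNReal.ofReal |φ x i - ψ (h x) i| ≤ supNormDist φ (fun x => ψ (h x)) :=
      le_iSup_of_le x (le_iSup_of_le i le_rfl)
    have h2 := lt_of_le_of_lt h1 hlt
    exact (ENNReal.ofReal_lt_ofReal_iff_of_nonneg (abs_nonneg _)).mp h2
  -- construct the continuous maps between sublevel sets
  refine hno ?_
  set A := sublevelTop ψ u' with hA
  set B := sublevelTop φ u with hB
  set C := sublevelTop φ v with hC
  set D := sublevelTop ψ v' with hD
  have hαmem : ∀ y : A, ∀ i, φ (h.symm y.1) i ≤ u i := by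
    intro y i
    have h1 := (abs_lt.mp (key (h.symm y.1) i)).2
    rw [h.apply_symm_apply] at h1
    have h2 := y.2 i
    have h3 := (hci i).trans (min_le_left _ _)
    simp only [hA, sublevelTop, sublevelSet] at h2 ⊢
    linarith
  have hβmem : ∀ x : C, ∀ i, ψ (h x.1) i ≤ v' i := by
    intro x i
    have h1 := (abs_lt.mp (key x.1 i)).1
    have h2 := x.2 i
    have h3 := (hci i).trans (min_le_right _ _)
    simp only [hC, sublevelTop, sublevelSet] at h2 ⊢
    linarith
  set α : A ⟶ B := TopCat.ofHom (ContinuousMap.mk (fun y : A => (⟨h.symm y.1, hαmem y⟩ : B))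
    (Continuous.subtype_mk (h.symm.continuous.comp continuous_subtype_val) _)) with hα
  set β : C ⟶ D := TopCat.ofHom (ContinuousMap.mk (fun x : C => (⟨h x.1, hβmem x⟩ : D))
    (Continuous.subtype_mk (h.continuous.comp continuous_subtype_val) _)) with hβ
  set ι₁ : B ⟶ C := sublevelIncl φ (fun i => (huv i).le) with hι₁
  set ι₂ : A ⟶ D := sublevelIncl ψ (fun i => (huv' i).le) with hι₂
  have hcomp : α ≫ ι₁ ≫ β = ι₂ := by
    ext y
    exact Subtype.ext (h.apply_symm_apply y.1)
  set F := singularHomologyFunctor G k with hF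
  have hFmap : F.map ι₂ = F.map α ≫ F.map ι₁ ≫ F.map β := by
    rw [← hcomp]; simp [Functor.map_comp]
  have hpt : ∀ z, (F.map β) ((F.map ι₁) ((F.map α) z)) = (F.map ι₂) z := by
    intro z
    rw [hFmap]
    rfl
  unfold ExistsSurjHomFromSubgroup persistentHomologyGroup
  set a : F.obj A →+ F.obj B := (F.map α).hom
  set i1 : F.obj B →+ F.obj C := (F.map ι₁).hom
  set b : F.obj C →+ F.obj D := (F.map β).hom
  set i2 : F.obj A →+ F.obj D := (F.map ι₂).hom
  refine ⟨AddSubgroup.comap (AddMonoidHom.range i1).subtype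
      (AddMonoidHom.range (i1.comp a)), ?_, ?_⟩
  · refine AddMonoidHom.mk' (fun s => ⟨b s.1.1, ?_⟩) ?_
    · obtain ⟨z, hz⟩ := s.2
      refine ⟨z, ?_⟩
      have : b (s.1.1) = b ((i1.comp a) z) := by rw [hz]; rfl
      rw [this]
      exact (hpt z).symm ▸ rfl
    · intro s t
      exact Subtype.ext (map_add b s.1.1 t.1.1)
  · rintro ⟨t, ht⟩
    obtain ⟨z, hz⟩ := ht
    refine ⟨⟨⟨i1 (a z), ⟨a z, rfl⟩⟩, ⟨z, rfl⟩⟩, ?_⟩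
    exact Subtype.ext ((hpt z).trans hz)
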